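/- Let j ≥ 2 and k ≥ 1 be integers and set N = 2j^k. Then the first N consecutive positive integers 1, 2, …, N can be partitioned into j pairwise disjoint sets, each containing exactly 2j^{k−1} integers, such that for every exponent r = 1, 2, …, k the sum of the r-th powers of the members of each set is the same for all j sets. -/

import Mathlib

open Finset

/-- Prouhet-style class function: `cl j n x` is the class (in `ZMod j`) of
`x ∈ [0, 2*j^(n+1))`. -/
def cl (j : ℕ) : ℕ → ℕ → ZMod j
  | 0, x => ((min x (2*j-1-x) : ℕ) : ZMod j)
  | (n+1), x => cl j n (x % (2*j^(n+1))) + ((x / (2*j^(n+1)) : ℕ) : ZMod j)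

/-- The `r`-th power sum of class `v`. -/
def psum (j n r : ℕ) (v : ZMod j) : ℤ :=
  ∑ x ∈ (Finset.range (2*j^(n+1))).filter (fun x => cl j n x = v), (x : ℤ)^r

lemma sum_range_mul {M : Type*} [AddCommMonoid M] (f : ℕ → M) (a B : ℕ) :
    ∑ x ∈ Finset.range (a*B), f x
      = ∑ q ∈ Finset.range a, ∑ y ∈ Finset.range B, f (q*B + y) := by
  induction a with
  | zero => simp
  | succ a ih =>
      have hdisj : Disjoint (Finset.range (a*B))
          ((Finset.range B).map (addLeftEmbedding (a*B))) := by
        simp only [Finset.disjoint_left, Finset.mem_range, Finset.mem_map,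
          addLeftEmbedding_apply]
        intro x hx
        push_neg
        intro y _
        omega
      rw [Finset.sum_range_succ, ← ih, Nat.succ_mul, Finset.range_add_eq_union,
        Finset.sum_union hdisj, Finset.sum_map]
      simp only [addLeftEmbedding_apply]

lemma sum_range_zmod {j : ℕ} [NeZero j] {M : Type*} [AddCommMonoid M]
    (g : ZMod j → M) :
    ∑ q ∈ Finset.range j, g ((q : ℕ) : ZMod j) = ∑ u : ZMod j, g u := by
  refine Finset.sum_nbij' (fun q => ((q : ℕ) : ZMod j)) (fun u => u.val) ?_ ?_ ?_ ?_ ?_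
  · intro a _; exact Finset.mem_univ _
  · intro u _; exact Finset.mem_range.mpr u.val_lt
  · intro a ha; exact ZMod.val_cast_of_lt (Finset.mem_range.mp ha)
  · intro u _; exact ZMod.natCast_zmod_val u
  · intro a _; rfl

lemma sum_zmod_sub {j : ℕ} [NeZero j] {M : Type*} [AddCommMonoid M] (v : ZMod j)
    (g : ZMod j → M) : ∑ u : ZMod j, g (v - u) = ∑ u : ZMod j, g u :=
  Fintype.sum_equiv (Equiv.subLeft v) _ _ (fun _ => rfl)

lemma cl_zero_lt {j : ℕ} (hj : 2 ≤ j) {x : ℕ} (hx : x < 2*j) :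
    min x (2*j-1-x) < j := by omega

lemma filter_cl_zero {j : ℕ} (hj : 2 ≤ j) (v : ZMod j) :
    (Finset.range (2*j)).filter (fun x => cl j 0 x = v)
      = {v.val, 2*j-1-v.val} := by
  haveI : NeZero j := ⟨by omega⟩
  have hv : v.val < j := v.val_lt
  ext x
  simp only [Finset.mem_filter, Finset.mem_range, Finset.mem_insert,
    Finset.mem_singleton]
  simp only [cl]
  constructor
  · rintro ⟨hx, hcl⟩
    have hlt := cl_zero_lt hj hx
    have : (min x (2*j-1-x)) = v.val := by
      rw [← hcl, ZMod.val_cast_of_lt hlt]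
    omega
  · intro h
    have hx : x < 2*j := by omega
    have : min x (2*j-1-x) = v.val := by omega
    rw [this, ZMod.natCast_zmod_val]
    exact ⟨hx, rfl⟩

lemma psum_zero_const {j : ℕ} (hj : 2 ≤ j) (r : ℕ) (hr : r ≤ 1) (v w : ZMod j) :
    psum j 0 r v = psum j 0 r w := by
  haveI : NeZero j := ⟨by omega⟩
  have key : ∀ u : ZMod j, psum j 0 r u
      = ((u.val : ℤ))^r + (((2*j-1-u.val : ℕ) : ℤ))^r := by
    intro u
    have hu : u.val < j := u.val_lt
    have h2 : 2*j^(0+1) = 2*j := by norm_num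
    rw [psum, h2, filter_cl_zero hj u]
    rw [Finset.sum_insert (by simp; omega), Finset.sum_singleton]
  rw [key v, key w]
  interval_cases r
  · simp
  · have hv : v.val < j := v.val_lt
    have hw : w.val < j := w.val_lt
    simp only [pow_one]
    push_cast [Nat.cast_sub (by omega : v.val ≤ 2*j-1),
      Nat.cast_sub (by omega : w.val ≤ 2*j-1)]
    ring

lemma psum_succ {j : ℕ} (hj : 2 ≤ j) (n r : ℕ) (v : ZMod j) :
    psum j (n+1) r v
      = ∑ i ∈ Finset.range (r+1), ∑ q ∈ Finset.range j,
          ((r.choose i : ℤ) * (((q:ℤ) * (2*(j:ℤ)^(n+1)))^(r-i)))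
            * psum j n i (v - ((q:ℕ) : ZMod j)) := by
  have hB : 0 < 2*j^(n+1) := by positivity
  have hsplit : 2*j^(n+1+1) = j * (2*j^(n+1)) := by ring
  rw [psum, Finset.sum_filter, hsplit, sum_range_mul]
  refine Eq.trans ?_ Finset.sum_comm
  refine Finset.sum_congr rfl (fun q hq => ?_)
  have hstep : ∀ y ∈ Finset.range (2*j^(n+1)),
      (if cl j (n+1) (q*(2*j^(n+1)) + y) = v
        then ((q*(2*j^(n+1)) + y : ℕ) : ℤ)^r else 0)
      = ∑ i ∈ Finset.range (r+1),
          ((r.choose i : ℤ) * (((q:ℤ) * (2*(j:ℤ)^(n+1)))^(r-i)))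
            * (if cl j n y = v - ((q:ℕ):ZMod j) then (y:ℤ)^i else 0) := by
    intro y hy
    have hy' : y < 2*j^(n+1) := Finset.mem_range.mp hy
    have hmod : (q*(2*j^(n+1)) + y) % (2*j^(n+1)) = y := by
      rw [add_comm, Nat.add_mul_mod_self_right, Nat.mod_eq_of_lt hy']
    have hdiv : (q*(2*j^(n+1)) + y) / (2*j^(n+1)) = q := by
      rw [add_comm, Nat.add_mul_div_right _ _ hB, Nat.div_eq_of_lt hy', zero_add]
    have hcl : cl j (n+1) (q*(2*j^(n+1)) + y) = cl j n y + ((q:ℕ):ZMod j) := by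
      simp only [cl, hmod, hdiv]
    have hcond : (cl j (n+1) (q*(2*j^(n+1)) + y) = v)
        ↔ (cl j n y = v - ((q:ℕ):ZMod j)) := by
      rw [hcl, ← eq_sub_iff_add_eq]
    have hval : ((q*(2*j^(n+1)) + y : ℕ) : ℤ)^r
        = ∑ i ∈ Finset.range (r+1),
            (y:ℤ)^i * ((q:ℤ)*(2*(j:ℤ)^(n+1)))^(r-i) * (r.choose i) := by
      push_cast
      rw [show ((q:ℤ)*(2*(j:ℤ)^(n+1)) + (y:ℤ)) = (y:ℤ) + (q:ℤ)*(2*(j:ℤ)^(n+1))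
        from by ring]
      exact add_pow _ _ _
    by_cases h : cl j n y = v - ((q:ℕ):ZMod j)
    · rw [if_pos (hcond.mpr h), hval]
      refine Finset.sum_congr rfl (fun i _ => ?_)
      rw [if_pos h]; ring
    · rw [if_neg (fun hc => h (hcond.mp hc))]
      symm
      refine Finset.sum_eq_zero (fun i _ => ?_)
      rw [if_neg h, mul_zero]
  rw [Finset.sum_congr rfl hstep, Finset.sum_comm]
  refine Finset.sum_congr rfl (fun i _ => ?_)
  rw [psum, Finset.sum_filter, Finset.mul_sum]

lemma psum_const {j : ℕ} (hj : 2 ≤ j) :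
    ∀ n, ∀ r ≤ n+1, ∀ v w : ZMod j, psum j n r v = psum j n r w := by
  haveI : NeZero j := ⟨by omega⟩
  intro n
  induction n with
  | zero => exact fun r hr v w => psum_zero_const hj r hr v w
  | succ n ih =>
    intro r hr v w
    rw [psum_succ hj, psum_succ hj]
    refine Finset.sum_congr rfl (fun i hi => ?_)
    have hi' : i ≤ r := by
      have := Finset.mem_range.mp hi; omega
    by_cases hle : i ≤ n+1
    · refine Finset.sum_congr rfl (fun q _ => ?_)
      rw [ih i hle (v - ((q:ℕ):ZMod j)) (w - ((q:ℕ):ZMod j))]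
    · have hieq : i = n+2 := by omega
      have hreq : r = n+2 := by omega
      subst hieq
      subst hreq
      simp only [Nat.sub_self, pow_zero, Nat.choose_self, Nat.cast_one, mul_one,
        one_mul]
      rw [sum_range_zmod (fun u => psum j n (n+2) (v - u)),
        sum_range_zmod (fun u => psum j n (n+2) (w - u)),
        sum_zmod_sub v, sum_zmod_sub w]

lemma card_cl_filter {j : ℕ} (hj : 2 ≤ j) (n : ℕ) (v : ZMod j) :
    ((Finset.range (2*j^(n+1))).filter (fun x => cl j n x = v)).card = 2*j^n := by
  haveI : NeZero j := ⟨by omega⟩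
  have hconst : ∀ w : ZMod j,
      ((Finset.range (2*j^(n+1))).filter (fun x => cl j n x = w)).card
        = ((Finset.range (2*j^(n+1))).filter (fun x => cl j n x = v)).card := by
    intro w
    have h := psum_const hj n 0 (by omega) w v
    simp only [psum, pow_zero, Finset.sum_const, nsmul_eq_mul, mul_one] at h
    exact_mod_cast h
  have hsum : ∑ w : ZMod j,
      ((Finset.range (2*j^(n+1))).filter (fun x => cl j n x = w)).card
        = 2*j^(n+1) := by
    calc ∑ w : ZMod j,
        ((Finset.range (2*j^(n+1))).filter (fun x => cl j n x = w)).card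
        = ∑ w : ZMod j, ∑ x ∈ Finset.range (2*j^(n+1)),
            if cl j n x = w then 1 else 0 := by
          exact Finset.sum_congr rfl (fun w _ => Finset.card_filter _ _)
      _ = ∑ x ∈ Finset.range (2*j^(n+1)), ∑ w : ZMod j,
            if cl j n x = w then 1 else 0 := Finset.sum_comm
      _ = ∑ x ∈ Finset.range (2*j^(n+1)), 1 := by
          refine Finset.sum_congr rfl (fun x _ => ?_)
          rw [Finset.sum_ite_eq]
          simp
      _ = 2*j^(n+1) := by simp
  rw [Finset.sum_congr rfl (fun w _ => hconst w), Finset.sum_const,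
    Finset.card_univ, ZMod.card, smul_eq_mul] at hsum
  have h2 : 2*j^(n+1) = j * (2*j^n) := by ring
  exact Nat.eq_of_mul_eq_mul_left (show 0 < j by omega) (hsum.trans h2)

theorem first_two_j_pow_k_integers_multigrade_partition (j k : ℕ) (hj : 2 ≤ j) (hk : 1 ≤ k) :
    ∃ A : Fin j → Finset ℤ,
      (∀ v w : Fin j, v ≠ w → Disjoint (A v) (A w)) ∧
      (∀ v : Fin j, (A v).card = 2 * j ^ (k - 1)) ∧
      (Finset.univ.biUnion A = Finset.Icc (1 : ℤ) (2 * (j : ℤ) ^ k)) ∧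
      (∀ r : ℕ, 1 ≤ r → r ≤ k → ∀ v w : Fin j,
        ∑ x ∈ A v, x ^ r = ∑ x ∈ A w, x ^ r) := by
  haveI : NeZero j := ⟨by omega⟩
  obtain ⟨n, rfl⟩ : ∃ n, k = n+1 := ⟨k-1, by omega⟩
  have hinj : Function.Injective (fun x : ℕ => (x:ℤ)+1) := by
    intro a b h
    have h' : (a:ℤ)+1 = (b:ℤ)+1 := h
    omega
  refine ⟨fun v => ((Finset.range (2*j^(n+1))).filter
      (fun x => cl j n x = ((v:ℕ) : ZMod j))).image (fun x : ℕ => (x:ℤ)+1), ?_, ?_, ?_, ?_⟩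
  · intro v w hvw
    rw [Finset.disjoint_image hinj]
    simp only [Finset.disjoint_left, Finset.mem_filter, Finset.mem_range]
    rintro x ⟨_, hxv⟩ ⟨_, hxw⟩
    apply hvw
    have : ((v:ℕ) : ZMod j) = ((w:ℕ) : ZMod j) := by rw [← hxv, ← hxw]
    have hval : (v:ℕ) = (w:ℕ) := by
      have h1 := ZMod.val_cast_of_lt (n := j) v.isLt
      have h2 := ZMod.val_cast_of_lt (n := j) w.isLt
      rw [← h1, ← h2, this]
    exact Fin.ext hval
  · intro v
    rw [Finset.card_image_of_injective _ hinj, card_cl_filter hj]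
    simp
  · ext z
    simp only [Finset.mem_biUnion, Finset.mem_univ, Finset.mem_image,
      Finset.mem_filter, Finset.mem_range, Finset.mem_Icc, true_and]
    constructor
    · rintro ⟨v, x, ⟨hx, _⟩, rfl⟩
      have hx' : (x:ℤ) < 2*(j:ℤ)^(n+1) := by exact_mod_cast hx
      omega
    · rintro ⟨h1, h2⟩
      have hzn : (2*(j:ℤ)^(n+1)) = ((2*j^(n+1) : ℕ) : ℤ) := by push_cast; ring
      set x : ℕ := z.toNat - 1 with hxdef
      have hzx : z = (x:ℤ) + 1 := by
        rw [hzn] at h2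
        omega
      have hxlt : x < 2*j^(n+1) := by
        rw [hzn] at h2
        omega
      refine ⟨⟨(cl j n x).val, ZMod.val_lt _⟩, x, ⟨hxlt, ?_⟩, hzx.symm⟩
      simp [ZMod.natCast_zmod_val]
  · intro r hr1 hrk v w
    have key : ∀ u : ZMod j,
        ∑ z ∈ ((Finset.range (2*j^(n+1))).filter
            (fun x => cl j n x = u)).image (fun x : ℕ => (x:ℤ)+1), z^r
          = ∑ i ∈ Finset.range (r+1),
              ((r.choose i : ℤ)) * psum j n i u := by
      intro u
      rw [Finset.sum_image (fun a _ b _ h => hinj h)]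
      calc ∑ x ∈ (Finset.range (2*j^(n+1))).filter (fun x => cl j n x = u),
            ((x:ℤ)+1)^r
          = ∑ x ∈ (Finset.range (2*j^(n+1))).filter (fun x => cl j n x = u),
            ∑ i ∈ Finset.range (r+1), (x:ℤ)^i * 1^(r-i) * (r.choose i) := by
            refine Finset.sum_congr rfl (fun x _ => ?_)
            exact add_pow _ _ _
        _ = ∑ i ∈ Finset.range (r+1),
            ∑ x ∈ (Finset.range (2*j^(n+1))).filter (fun x => cl j n x = u),
              (x:ℤ)^i * 1^(r-i) * (r.choose i) := Finset.sum_comm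
        _ = ∑ i ∈ Finset.range (r+1), ((r.choose i : ℤ)) * psum j n i u := by
            refine Finset.sum_congr rfl (fun i _ => ?_)
            rw [psum, Finset.mul_sum]
            refine Finset.sum_congr rfl (fun x _ => ?_)
            ring
    rw [key, key]
    refine Finset.sum_congr rfl (fun i hi => ?_)
    have hi' : i ≤ n+1 := by
      have := Finset.mem_range.mp hi; omega
    rw [psum_const hj n i hi' ((v:ℕ) : ZMod j) ((w:ℕ) : ZMod j)]
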